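/- A positive Hermitian structure (𝒢, ℐ₊) on V is parallel with respect to the operator ∇⁺ (defined by ∇⁺_w v = π₊⟦w, v⟧ for w ∈ Γ(V₋), v ∈ Γ(V₊)) if and only if ⟦Γ(V₊^{1,0}), Γ(V₊^{1,0})⟧ ⊆ Γ(V₊ ⊗ ℂ), where V₊^{1,0} is the +i-eigenspace of ℐ₊. -/

import Mathlib

/-!
STATEMENT 14: A positive Hermitian structure `(𝒢, ℐ₊)` is parallel with respect
to `∇⁺` (defined by `∇⁺_w v = π₊⟦w,v⟧` for `w ∈ Γ(V₋)`, `v ∈ Γ(V₊)`) if and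
only if `⟦Γ(V₊^{1,0}), Γ(V₊^{1,0})⟧ ⊆ Γ(V₊ ⊗ ℂ)`, where `V₊^{1,0}` is the
`+i`-eigenspace of `ℐ₊`.

Here `E` abstracts (complexified) sections of `𝕋M`, `Vp`, `Vm` the eigenbundles
`V₊ ⊗ ℂ`, `V₋ ⊗ ℂ` of the generalized metric (orthogonal complements of each
other), `W = Γ(V₊^{1,0})` (a maximal isotropic of `V₊ ⊗ ℂ`) and `πp` the
orthogonal projection onto `V₊`.
-/

/-- Abstraction of (complexified sections of) `𝕋M` with the `H`-Courant
(Dorfman) bracket, pairing and anchor. -/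
structure CourantAlgebra (A : Type*) (E : Type*) [CommRing A] [AddCommGroup E]
    [Module A E] where
  p : E →ₗ[A] E →ₗ[A] A
  p_symm : ∀ u v, p u v = p v u
  br : E → E → E
  br_add_left : ∀ u v w, br (u + v) w = br u w + br v w
  br_add_right : ∀ u v w, br u (v + w) = br u v + br u w
  D : E → A → A
  D_add : ∀ u f g, D u (f + g) = D u f + D u g
  δ : A →+ E
  leibniz : ∀ u v f, br u (f • v) = f • br u v + (D u f) • v
  leibniz' : ∀ u v f, br (f • u) v = f • br u v - (D v f) • u + (2 * p u v) • δ f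
  invariance : ∀ u v w, D u (p v w) = p (br u v) w + p v (br u w)
  symm_part : ∀ u v, br u v + br v u = δ (2 * p u v)

theorem parallel_iff_bracket_condition
    {A E : Type*} [CommRing A] [AddCommGroup E] [Module A E]
    (C : CourantAlgebra A E)
    (Vp Vm : Submodule A E) (W : Submodule A E) (hWVp : W ≤ Vp)
    -- `V₊` and `V₋` are orthogonal, and `V₊ = V₋^⊥`
    (horth : ∀ v ∈ Vp, ∀ w ∈ Vm, C.p v w = 0)
    (hVmPerp : ∀ u : E, (∀ w ∈ Vm, C.p u w = 0) → u ∈ Vp)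
    -- `W = V₊^{1,0}` is a maximal isotropic of `V₊ ⊗ ℂ`
    (hWiso : ∀ u ∈ W, ∀ v ∈ W, C.p u v = 0)
    (hWmax : ∀ u ∈ Vp, (∀ v ∈ W, C.p u v = 0) → u ∈ W)
    -- orthogonal projection `π₊ : 𝕋M → V₊`
    (πp : E →ₗ[A] E)
    (hπ1 : ∀ u, πp u ∈ Vp) (hπ2 : ∀ u ∈ Vp, πp u = u) (hπ3 : ∀ u, u - πp u ∈ Vm) :
    -- `ℐ₊` is parallel for `∇⁺` iff `⟦W, W⟧ ⊆ Γ(V₊ ⊗ ℂ)`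
    (∀ w ∈ Vm, ∀ v ∈ W, πp (C.br w v) ∈ W) ↔
      (∀ v₁ ∈ W, ∀ v₂ ∈ W, C.br v₁ v₂ ∈ Vp) := by
  have hD0 : ∀ u : E, C.D u 0 = 0 := by
    intro u
    have := C.D_add u 0 0
    simpa using this.symm
  have hanti : ∀ u v : E, C.p u v = 0 → C.br u v = -C.br v u := by
    intro u v h
    have := C.symm_part u v
    rw [h, mul_zero, map_zero] at this
    exact eq_neg_of_add_eq_zero_left this
  constructor
  · intro hpar v₁ hv₁ v₂ hv₂
    apply hVmPerp
    intro w hw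
    have hp12w : C.p v₂ w = 0 := horth v₂ (hWVp hv₂) w hw
    have hinv := C.invariance v₁ v₂ w
    rw [hp12w, hD0] at hinv
    -- C.br v₁ w = - C.br w v₁
    have hp1w : C.p v₁ w = 0 := horth v₁ (hWVp hv₁) w hw
    have hb : C.br v₁ w = -C.br w v₁ := hanti v₁ w hp1w
    have hdecomp : C.br w v₁ = πp (C.br w v₁) + (C.br w v₁ - πp (C.br w v₁)) := by abel
    have h1 : C.p v₂ (πp (C.br w v₁)) = 0 := hWiso v₂ hv₂ _ (hpar w hw v₁ hv₁)
    have h2 : C.p v₂ (C.br w v₁ - πp (C.br w v₁)) = 0 := horth v₂ (hWVp hv₂) _ (hπ3 _)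
    have h3 : C.p v₂ (C.br v₁ w) = 0 := by
      rw [hb]
      have : C.p v₂ (C.br w v₁) = 0 := by
        calc C.p v₂ (C.br w v₁)
            = C.p v₂ (πp (C.br w v₁) + (C.br w v₁ - πp (C.br w v₁))) := by rw [← hdecomp]
          _ = C.p v₂ (πp (C.br w v₁)) + C.p v₂ (C.br w v₁ - πp (C.br w v₁)) := by
              rw [map_add]
          _ = 0 := by rw [h1, h2, add_zero]
      rw [map_neg, this, neg_zero]
    have := hinv
    rw [h3, add_zero] at this
    exact this.symm
  · intro hbr w hw v hv
    apply hWmax _ (hπ1 _)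
    intro v₂ hv₂
    have h2 : C.p (C.br w v - πp (C.br w v)) v₂ = 0 := by
      rw [C.p_symm]
      exact horth v₂ (hWVp hv₂) _ (hπ3 _)
    have key : C.p (C.br w v) v₂ = 0 := by
      have hpwv : C.p w v = 0 := by
        rw [C.p_symm]; exact horth v (hWVp hv) w hw
      have hb : C.br w v = -C.br v w := hanti w v hpwv
      have hpwv₂ : C.p w v₂ = 0 := by
        rw [C.p_symm]; exact horth v₂ (hWVp hv₂) w hw
      have hinv := C.invariance v w v₂
      rw [hpwv₂, hD0] at hinv
      have h4 : C.p w (C.br v v₂) = 0 := by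
        rw [C.p_symm]; exact horth _ (hbr v hv v₂ hv₂) w hw
      rw [h4, add_zero] at hinv
      rw [hb, map_neg, LinearMap.neg_apply, ← hinv, neg_zero]
    have : C.p (πp (C.br w v)) v₂ = C.p (C.br w v) v₂ - C.p (C.br w v - πp (C.br w v)) v₂ := by
      rw [map_sub]; simp
    rw [this, key, h2, sub_zero]
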